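/- arXiv:2203.09723 — 2 statements merged into one kernel-verified Lean document; each statement's English description precedes it below -/
import Mathlib

section
/- For any real number θ₀ with 0 < |θ₀| < π and any real θ, cos θ ≥ -(1/2)(sin θ₀ / θ₀)θ² + cos θ₀ + (1/2)θ₀ sin θ₀, with equality if and only if |θ| = |θ₀|. -/
open Real

/-- On (0, π), `t * cos t < sin t`. -/
lemma aux_tcos_lt_sin {t : ℝ} (ht : 0 < t) (ht' : t < π) : t * Real.cos t < Real.sin t := by
  have key : StrictMonoOn (fun s => Real.sin s - s * Real.cos s) (Set.Icc 0 π) := by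
    apply strictMonoOn_of_deriv_pos (convex_Icc 0 π)
    · fun_prop
    · intro x hx
      rw [interior_Icc] at hx
      have hd : HasDerivAt (fun s => Real.sin s - s * Real.cos s)
          (Real.cos x - (1 * Real.cos x + x * (-Real.sin x))) x :=
        (Real.hasDerivAt_sin x).sub ((hasDerivAt_id x).mul (Real.hasDerivAt_cos x))
      rw [hd.deriv]
      have := Real.sin_pos_of_pos_of_lt_pi hx.1 hx.2
      nlinarith [hx.1]
  have h0 : (0:ℝ) ∈ Set.Icc (0:ℝ) π := ⟨le_refl 0, le_of_lt Real.pi_pos⟩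
  have ht2 : t ∈ Set.Icc (0:ℝ) π := ⟨le_of_lt ht, le_of_lt ht'⟩
  have := key h0 ht2 ht
  simp at this
  linarith

/-- `sin t / t` is strictly decreasing on `(0, π]`. -/
lemma aux_sinc_strictAnti : StrictAntiOn (fun t => Real.sin t / t) (Set.Ioc 0 π) := by
  apply strictAntiOn_of_deriv_neg (convex_Ioc 0 π)
  · apply ContinuousOn.div Real.continuousOn_sin continuousOn_id
    intro x hx
    exact ne_of_gt hx.1
  · intro x hx
    rw [interior_Ioc] at hx
    have hx0 : x ≠ 0 := ne_of_gt hx.1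
    have hd : HasDerivAt (fun t => Real.sin t / t)
        ((Real.cos x * x - Real.sin x * 1) / x ^ 2) x :=
      (Real.hasDerivAt_sin x).div (hasDerivAt_id x) hx0
    rw [hd.deriv]
    have h1 : x * Real.cos x < Real.sin x := aux_tcos_lt_sin hx.1 hx.2
    apply div_neg_of_neg_of_pos
    · nlinarith
    · positivity

/-- Main one-variable fact: for `a ∈ (0,π)` and `t ≥ 0` with `t ≠ a`,
`cos a + (sin a / a)/2 * a² < cos t + (sin a / a)/2 * t²`. -/
lemma aux_min {a t : ℝ} (ha : 0 < a) (haπ : a < π) (ht : 0 ≤ t) (hne : t ≠ a) :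
    Real.cos a + (Real.sin a / a) / 2 * a ^ 2 <
      Real.cos t + (Real.sin a / a) / 2 * t ^ 2 := by
  set c : ℝ := Real.sin a / a with hc
  have hsina : 0 < Real.sin a := Real.sin_pos_of_pos_of_lt_pi ha haπ
  have hcpos : 0 < c := div_pos hsina ha
  set f : ℝ → ℝ := fun s => Real.cos s + c / 2 * s ^ 2 with hf
  have hderiv : ∀ x : ℝ, HasDerivAt f (-Real.sin x + c / 2 * (2 * x)) x := by
    intro x
    have h1 : HasDerivAt (fun s : ℝ => s ^ 2) (2 * x) x := by
      simpa using hasDerivAt_pow 2 x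
    exact (Real.hasDerivAt_cos x).add (h1.const_mul (c / 2))
  -- f strictly decreasing on [0, a]
  have hanti : StrictAntiOn f (Set.Icc 0 a) := by
    apply strictAntiOn_of_deriv_neg (convex_Icc 0 a)
    · fun_prop
    · intro x hx
      rw [interior_Icc] at hx
      rw [(hderiv x).deriv]
      have hxπ : x ∈ Set.Ioc (0:ℝ) π := ⟨hx.1, le_of_lt (lt_trans hx.2 haπ)⟩
      have haπ' : a ∈ Set.Ioc (0:ℝ) π := ⟨ha, le_of_lt haπ⟩
      have := aux_sinc_strictAnti hxπ haπ' hx.2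
      -- sin a / a < sin x / x, so c * x < sin x
      have hxpos := hx.1
      rw [div_lt_div_iff₀ ha hxpos] at this
      have : c * x < Real.sin x := by
        rw [hc]
        rw [div_mul_eq_mul_div, div_lt_iff₀ ha]
        linarith
      linarith
  -- f strictly increasing on [a, π]
  have hmono : StrictMonoOn f (Set.Icc a π) := by
    apply strictMonoOn_of_deriv_pos (convex_Icc a π)
    · fun_prop
    · intro x hx
      rw [interior_Icc] at hx
      rw [(hderiv x).deriv]
      have hxpos : 0 < x := lt_trans ha hx.1
      have hxπ : x ∈ Set.Ioc (0:ℝ) π := ⟨hxpos, le_of_lt hx.2⟩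
      have haπ' : a ∈ Set.Ioc (0:ℝ) π := ⟨ha, le_of_lt haπ⟩
      have := aux_sinc_strictAnti haπ' hxπ hx.1
      -- sin x / x < sin a / a = c, so sin x < c * x
      rw [div_lt_div_iff₀ hxpos ha] at this
      have : Real.sin x < c * x := by
        rw [hc, div_mul_eq_mul_div, lt_div_iff₀ ha]
        linarith
      linarith
  have goal : f a < f t := by
    rcases lt_or_gt_of_ne hne with h | h
    · -- t < a
      exact hanti ⟨ht, le_of_lt h⟩ ⟨le_trans ht (le_of_lt h), le_refl a⟩ h
    · -- t > a
      rcases le_or_gt t π with htπ | htπ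
      · exact hmono ⟨le_refl a, le_of_lt haπ⟩ ⟨le_of_lt h, htπ⟩ h
      · have h1 : f a < f π :=
          hmono ⟨le_refl a, le_of_lt haπ⟩ ⟨le_of_lt haπ, le_refl π⟩ haπ
        have h2 : f π ≤ f t := by
          simp only [hf, Real.cos_pi]
          have hcos : -1 ≤ Real.cos t := Real.neg_one_le_cos t
          have hsq : π ^ 2 ≤ t ^ 2 := by
            nlinarith [Real.pi_pos]
          nlinarith
        linarith
  simpa [hf] using goal

theorem cos_quadratic_minorant (θ₀ θ : ℝ) (h0 : 0 < |θ₀|) (hπ : |θ₀| < π) :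
    Real.cos θ ≥ -(1/2) * (Real.sin θ₀ / θ₀) * θ^2 + Real.cos θ₀ + (1/2) * θ₀ * Real.sin θ₀ ∧
    (Real.cos θ = -(1/2) * (Real.sin θ₀ / θ₀) * θ^2 + Real.cos θ₀ + (1/2) * θ₀ * Real.sin θ₀ ↔
      |θ| = |θ₀|) := by
  have hθ₀ : θ₀ ≠ 0 := by
    intro h; rw [h] at h0; simp at h0
  -- reduce to absolute values
  set a : ℝ := |θ₀| with hadef
  set t : ℝ := |θ| with htdef
  have hca : Real.cos θ₀ = Real.cos a := (Real.cos_abs θ₀).symm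
  have hct : Real.cos θ = Real.cos t := (Real.cos_abs θ).symm
  have hsq0 : θ₀ ^ 2 = a ^ 2 := (sq_abs θ₀).symm
  have hsqt : θ ^ 2 = t ^ 2 := (sq_abs θ).symm
  have hsdiv : Real.sin θ₀ / θ₀ = Real.sin a / a := by
    rcases abs_cases θ₀ with ⟨h1, _⟩ | ⟨h1, _⟩
    · rw [hadef, h1]
    · rw [hadef, h1, Real.sin_neg, neg_div_neg_eq]
  have hθ₀sin : (1/2 : ℝ) * θ₀ * Real.sin θ₀ = (Real.sin a / a) / 2 * a ^ 2 := by
    rw [← hsdiv, ← hsq0]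
    field_simp
  have key : ∀ s : ℝ, -(1/2) * (Real.sin θ₀ / θ₀) * s ^ 2 + Real.cos θ₀ +
      (1/2) * θ₀ * Real.sin θ₀ =
      Real.cos a + (Real.sin a / a) / 2 * a ^ 2 - (Real.sin a / a) / 2 * s ^ 2 := by
    intro s
    rw [hsdiv, hca, hθ₀sin]; ring
  have ha : 0 < a := h0
  have haπ : a < π := hπ
  have ht0 : 0 ≤ t := abs_nonneg θ
  constructor
  · rw [key θ, hsqt, hct, ge_iff_le, sub_le_iff_le_add]
    rcases eq_or_ne t a with h | h
    · rw [h]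
    · have := aux_min ha haπ ht0 h
      linarith
  · constructor
    · intro heq
      by_contra hne
      have := aux_min ha haπ ht0 hne
      rw [key θ, hsqt, hct] at heq
      linarith
    · intro heq
      rw [key θ, hsqt, hct, heq]; ring
end

section
/- For a finite sum J(τ) = Σ_k A_k cos(ω_k τ + φ_k) with A_k ≥ 0, and auxiliary parameters θ_k satisfying 0 < |θ_k| ≤ π chosen so that |ω_k τ₀ + φ_k + 2ν_k π| ≤ π for integers ν_k, the function Q(τ) = Σ_k [-(A_k/2)(sin θ_k/θ_k)(ω_k τ + φ_k + 2ν_k π)² + A_k (cos θ_k + (1/2)θ_k sin θ_k)] satisfies J(τ) ≥ Q(τ) for all real τ, with equality at τ = τ₀ when θ_k = ω_k τ₀ + φ_k + 2ν_k π for all k. -/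
open Real

/-- Chord inequality from concavity of sin on [0,π]. -/
lemma chord_sin {a b : ℝ} (ha : 0 ≤ a) (hab : a ≤ b) (hb : b ≤ π) :
    a * Real.sin b ≤ b * Real.sin a := by
  rcases eq_or_lt_of_le (ha.trans hab) with h | hb0
  · have ha0 : a = 0 := le_antisymm (hab.trans h.symm.le) ha
    simp [ha0, ← h]
  · have h1 : (0:ℝ) ∈ Set.Icc 0 π := ⟨le_rfl, Real.pi_pos.le⟩
    have h2 : b ∈ Set.Icc 0 π := ⟨hb0.le, hb⟩
    have hμ : 0 ≤ a / b := div_nonneg ha hb0.le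
    have hμ1 : (1 - a / b) + a / b = 1 := by ring
    have hμ0 : 0 ≤ 1 - a / b := by
      have : a / b ≤ 1 := (div_le_one hb0).mpr hab
      linarith
    have hcon := strictConcaveOn_sin_Icc.concaveOn.2 h1 h2 hμ0 hμ hμ1
    simp only [smul_eq_mul, Real.sin_zero, mul_zero, zero_add] at hcon
    rw [div_mul_cancel₀ a hb0.ne'] at hcon
    calc a * Real.sin b = b * (a / b * Real.sin b) := by field_simp
      _ ≤ b * Real.sin a := mul_le_mul_of_nonneg_left hcon hb0.le

lemma jordan_bound {t : ℝ} (ht0 : 0 < t) (htπ : t ≤ π) :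
    (1 + Real.cos t) * (2 * t) ≤ Real.sin t * (π ^ 2 - t ^ 2) := by
  have hπ : (0:ℝ) < π := Real.pi_pos
  obtain ⟨s, hs_def⟩ : ∃ s, Real.sin (t / 2) = s := ⟨_, rfl⟩
  obtain ⟨co, hco_def⟩ : ∃ c, Real.cos (t / 2) = c := ⟨_, rfl⟩
  have hsin : Real.sin t = 2 * s * co := by
    rw [← hs_def, ← hco_def, ← Real.sin_two_mul]; congr 1; ring
  have hsq : s ^ 2 + co ^ 2 = 1 := by
    rw [← hs_def, ← hco_def]; exact Real.sin_sq_add_cos_sq _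
  have hcos2 : Real.cos t = 2 * co ^ 2 - 1 := by
    rw [← hco_def, ← Real.cos_two_mul]; congr 1; ring
  have hs_ge : t / π ≤ s := by
    have h := Real.mul_le_sin (x := t / 2) (by linarith) (by linarith)
    rw [hs_def] at h
    calc t / π = 2 / π * (t / 2) := by field_simp
      _ ≤ s := h
  have hco_le : co ≤ (π - t) / 2 := by
    have h2 : Real.sin (π / 2 - t / 2) ≤ π / 2 - t / 2 := Real.sin_le (by linarith)
    rw [Real.sin_pi_div_two_sub, hco_def] at h2
    linarith
  have hco0 : 0 ≤ co := by
    rw [← hco_def]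
    exact Real.cos_nonneg_of_mem_Icc ⟨by linarith, by linarith⟩
  have hs0 : 0 ≤ s := by
    rw [← hs_def]
    exact Real.sin_nonneg_of_nonneg_of_le_pi (by linarith) (by linarith)
  have h1 : t ≤ π * s := by
    calc t = (t / π) * π := by field_simp
      _ ≤ s * π := mul_le_mul_of_nonneg_right hs_ge hπ.le
      _ = π * s := mul_comm _ _
  rw [hsin, hcos2]
  -- goal: (1 + (2co² - 1)) * 2t ≤ 2 s co (π² - t²), i.e. 4 t co² ≤ 2 s co (π² - t²)
  have key : 2 * t * co ≤ s * (π ^ 2 - t ^ 2) := by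
    nlinarith [mul_le_mul_of_nonneg_right h1 (by linarith : (0:ℝ) ≤ π - t),
      mul_le_mul_of_nonneg_right hco_le (by linarith : (0:ℝ) ≤ 2 * t),
      mul_nonneg hs0 (mul_nonneg ht0.le (by linarith : (0:ℝ) ≤ π - t))]
  nlinarith [mul_le_mul_of_nonneg_right key hco0]

lemma key_nonneg {t : ℝ} (ht0 : 0 < t) (htπ : t ≤ π) {x : ℝ} (hx : 0 ≤ x) :
    Real.cos t + Real.sin t / (2 * t) * (t ^ 2 - x ^ 2) ≤ Real.cos x := by
  set c : ℝ := Real.sin t / (2 * t) with hc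
  have h2t : (0:ℝ) < 2 * t := by linarith
  have hsint : 0 ≤ Real.sin t := Real.sin_nonneg_of_nonneg_of_le_pi ht0.le htπ
  have hc0 : 0 ≤ c := div_nonneg hsint (by linarith)
  set F : ℝ → ℝ := fun y => Real.cos y + c * y ^ 2 with hF_def
  have hF : ∀ y, HasDerivAt F (-Real.sin y + c * (2 * y)) y := by
    intro y
    have h1 := (Real.hasDerivAt_cos y).add ((hasDerivAt_pow 2 y).const_mul c)
    norm_num at h1
    exact h1
  have hFc : Continuous F := by rw [hF_def]; continuity
  have hFd : Differentiable ℝ F := fun y => (hF y).differentiableAt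
  have hderiv : ∀ y, deriv F y = -Real.sin y + c * (2 * y) := fun y => (hF y).deriv
  suffices h : F t ≤ F x by
    simp only [hF_def] at h
    have hexp : c * (t ^ 2 - x ^ 2) = c * t ^ 2 - c * x ^ 2 := by ring
    linarith
  rcases le_or_gt x π with h1 | h1
  · rcases le_or_gt x t with h2 | h2
    · -- x ∈ [0, t] : F antitone on [0,t]
      have hanti : AntitoneOn F (Set.Icc 0 t) := by
        apply antitoneOn_of_deriv_nonpos (convex_Icc 0 t) hFc.continuousOn
          hFd.differentiableOn
        intro y hy
        rw [interior_Icc] at hy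
        rw [hderiv]
        have hch : y * Real.sin t ≤ t * Real.sin y := chord_sin hy.1.le hy.2.le htπ
        rw [hc, div_mul_eq_mul_div]
        rw [show -Real.sin y + Real.sin t * (2 * y) / (2 * t)
            = (y * Real.sin t - t * Real.sin y) / t by field_simp; ring]
        exact div_nonpos_of_nonpos_of_nonneg (by linarith) ht0.le
      exact hanti ⟨hx, h2⟩ ⟨ht0.le, le_rfl⟩ h2
    · -- x ∈ [t, π] : F monotone on [t, π]
      have hmono : MonotoneOn F (Set.Icc t π) := by
        apply monotoneOn_of_deriv_nonneg (convex_Icc t π) hFc.continuousOn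
          hFd.differentiableOn
        intro y hy
        rw [interior_Icc] at hy
        rw [hderiv]
        have hch : t * Real.sin y ≤ y * Real.sin t := chord_sin ht0.le hy.1.le hy.2.le
        rw [hc, div_mul_eq_mul_div]
        rw [show -Real.sin y + Real.sin t * (2 * y) / (2 * t)
            = (y * Real.sin t - t * Real.sin y) / t by field_simp; ring]
        exact div_nonneg (by linarith) ht0.le
      exact hmono ⟨le_rfl, htπ⟩ ⟨h2.le, h1⟩ h2.le
  · -- x ≥ π
    have hb := jordan_bound ht0 htπ
    have hcx : -1 ≤ Real.cos x := Real.neg_one_le_cos _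
    have hx2 : π ^ 2 ≤ x ^ 2 := by nlinarith
    simp only [hF_def]
    have hm : c * π ^ 2 ≤ c * x ^ 2 := mul_le_mul_of_nonneg_left hx2 hc0
    have hb' : Real.cos t + c * t ^ 2 ≤ -1 + c * π ^ 2 := by
      rw [hc, ← sub_nonneg]
      rw [show -1 + Real.sin t / (2*t) * π ^ 2 - (Real.cos t + Real.sin t / (2*t) * t ^ 2)
        = (Real.sin t * (π ^ 2 - t ^ 2) - (1 + Real.cos t) * (2 * t)) / (2 * t) by
          field_simp; ring]
      exact div_nonneg (by linarith) h2t.le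
    linarith

lemma key_all {t : ℝ} (ht0 : 0 < t) (htπ : t ≤ π) (x : ℝ) :
    Real.cos t + Real.sin t / (2 * t) * (t ^ 2 - x ^ 2) ≤ Real.cos x := by
  rcases le_or_gt 0 x with hx | hx
  · exact key_nonneg ht0 htπ hx
  · have := key_nonneg ht0 htπ (x := -x) (by linarith)
    simpa using this

lemma key_final {t : ℝ} (ht0 : 0 < |t|) (htπ : |t| ≤ π) (x : ℝ) :
    -(1/2) * (Real.sin t / t) * x ^ 2 + (Real.cos t + (1/2) * t * Real.sin t)
      ≤ Real.cos x := by
  have htne : t ≠ 0 := by intro h; rw [h] at ht0; simp at ht0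
  have hform : ∀ u : ℝ, u ≠ 0 →
      Real.cos u + Real.sin u / (2 * u) * (u ^ 2 - x ^ 2)
      = -(1/2) * (Real.sin u / u) * x ^ 2 + (Real.cos u + (1/2) * u * Real.sin u) := by
    intro u hu; field_simp; ring
  rcases abs_cases t with ⟨habs, _⟩ | ⟨habs, hneg⟩
  · have ht0' : 0 < t := by rwa [habs] at ht0
    have htπ' : t ≤ π := by rwa [habs] at htπ
    rw [← hform t htne]
    exact key_all ht0' htπ' x
  · have ht0' : 0 < -t := by rwa [habs] at ht0
    have htπ' : -t ≤ π := by rwa [habs] at htπ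
    have h := key_all ht0' htπ' x
    rw [hform (-t) (by simpa using htne)] at h
    simp only [Real.sin_neg, Real.cos_neg] at h
    have heq : -(1/2) * (-Real.sin t / -t) * x ^ 2 + (Real.cos t + (1/2) * -t * -Real.sin t)
        = -(1/2) * (Real.sin t / t) * x ^ 2 + (Real.cos t + (1/2) * t * Real.sin t) := by
      rw [neg_div_neg_eq]; ring
    rwa [heq] at h

theorem auxiliary_function_for_gcc (n : ℕ) (A ω φ : Fin n → ℝ) (hA : ∀ k, 0 ≤ A k)
    (θ : Fin n → ℝ) (ν : Fin n → ℤ) (τ₀ : ℝ)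
    (hθ0 : ∀ k, 0 < |θ k|) (hθπ : ∀ k, |θ k| ≤ π)
    (hwrap : ∀ k, |ω k * τ₀ + φ k + 2 * (ν k) * π| ≤ π)
    (htangent : ∀ k, θ k = ω k * τ₀ + φ k + 2 * (ν k) * π) :
    (∀ τ : ℝ,
      (∑ k, A k * Real.cos (ω k * τ + φ k)) ≥
      (∑ k, (-(A k / 2) * (Real.sin (θ k) / θ k) * (ω k * τ + φ k + 2 * (ν k) * π)^2
        + A k * (Real.cos (θ k) + (1/2) * θ k * Real.sin (θ k))))) ∧
    (∑ k, A k * Real.cos (ω k * τ₀ + φ k)) =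
      (∑ k, (-(A k / 2) * (Real.sin (θ k) / θ k) * (ω k * τ₀ + φ k + 2 * (ν k) * π)^2
        + A k * (Real.cos (θ k) + (1/2) * θ k * Real.sin (θ k)))) := by
  have hper : ∀ (k : Fin n) (τ : ℝ),
      Real.cos (ω k * τ + φ k) = Real.cos (ω k * τ + φ k + 2 * (ν k) * π) := by
    intro k τ
    rw [show ω k * τ + φ k + 2 * (ν k) * π = (ω k * τ + φ k) + (ν k : ℝ) * (2 * π) by ring]
    rw [Real.cos_add_int_mul_two_pi]
  have hterm : ∀ (k : Fin n) (τ : ℝ),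
      -(A k / 2) * (Real.sin (θ k) / θ k) * (ω k * τ + φ k + 2 * (ν k) * π)^2
        + A k * (Real.cos (θ k) + (1/2) * θ k * Real.sin (θ k))
      ≤ A k * Real.cos (ω k * τ + φ k) := by
    intro k τ
    rw [hper k τ]
    set x := ω k * τ + φ k + 2 * (ν k : ℝ) * π
    have h := key_final (hθ0 k) (hθπ k) x
    have hmul := mul_le_mul_of_nonneg_left h (hA k)
    calc -(A k / 2) * (Real.sin (θ k) / θ k) * x ^ 2
          + A k * (Real.cos (θ k) + (1/2) * θ k * Real.sin (θ k))
        = A k * (-(1/2) * (Real.sin (θ k) / θ k) * x ^ 2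
          + (Real.cos (θ k) + (1/2) * θ k * Real.sin (θ k))) := by ring
      _ ≤ A k * Real.cos x := hmul
  constructor
  · intro τ
    exact Finset.sum_le_sum fun k _ => hterm k τ
  · apply Finset.sum_congr rfl
    intro k _
    have htne : θ k ≠ 0 := by
      intro h; have := hθ0 k; rw [h] at this; simp at this
    rw [hper k τ₀, ← htangent k]
    field_simp
    ring
end
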